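/- Let D = diag(1 + ai, 1 − ai) with a = tan(θ/2) for some θ ∈ (0, π). Then 0 belongs to the angular numerical range of D^{⊗N} (equivalently, there is a nonzero positive semidefinite operator orthogonal to D^{⊗N}) if and only if N ≥ π/θ. -/

import Mathlib

open Matrix
open scoped ComplexOrder

/-- The numerical range `W(A) = {⟨ψ|A|ψ⟩ : ‖ψ‖ = 1}`. -/
noncomputable def numRange {ι : Type*} [Fintype ι] (A : Matrix ι ι ℂ) : Set ℂ :=
  {z | ∃ ψ : ι → ℂ, star ψ ⬝ᵥ ψ = 1 ∧ z = star ψ ⬝ᵥ A.mulVec ψ}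

/-- The angular numerical range `𝒲(A) = ⋃_{t>0} W(tA)`. -/
noncomputable def angNumRange {ι : Type*} [Fintype ι] (A : Matrix ι ι ℂ) : Set ℂ :=
  ⋃ t ∈ Set.Ioi (0 : ℝ), numRange ((t : ℂ) • A)

/-- The `N`-fold tensor power `A^{⊗N}` as a matrix indexed by `Fin N → Fin d`. -/
noncomputable def tensorPow {d : ℕ} (N : ℕ) (A : Matrix (Fin d) (Fin d) ℂ) :
    Matrix (Fin N → Fin d) (Fin N → Fin d) ℂ :=
  fun j k => ∏ i, A (j i) (k i)

lemma tensorPow_diagonal {d N : ℕ} (v : Fin d → ℂ) :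
    tensorPow N (Matrix.diagonal v) = Matrix.diagonal (fun j => ∏ i, v (j i)) := by
  ext j k
  by_cases h : j = k
  · subst h
    simp [tensorPow, Matrix.diagonal_apply_eq]
  · rw [Matrix.diagonal_apply_ne _ h]
    obtain ⟨i, hi⟩ := Function.ne_iff.1 h
    exact Finset.prod_eq_zero (Finset.mem_univ i) (Matrix.diagonal_apply_ne _ hi)

-- entry of the diagonal vector, as exponential

lemma entry_formula {θ : ℝ} (hθ1 : 0 < θ) (hθ2 : θ < Real.pi) (N : ℕ)
    (j : Fin N → Fin 2) :
    (∏ i, (![1 + (Real.tan (θ/2) : ℂ) * Complex.I,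
             1 - (Real.tan (θ/2) : ℂ) * Complex.I] : Fin 2 → ℂ) (j i))
    = ((Real.cos (θ/2) : ℂ))⁻¹ ^ N *
      Complex.exp ((( θ/2 * ∑ i, (![1,-1] : Fin 2 → ℝ) (j i) : ℝ)) * Complex.I) := by
  have hcos : (0:ℝ) < Real.cos (θ/2) :=
    Real.cos_pos_of_mem_Ioo ⟨by linarith [Real.pi_pos], by linarith⟩
  have hv : ∀ m : Fin 2, (![1 + (Real.tan (θ/2) : ℂ) * Complex.I,
             1 - (Real.tan (θ/2) : ℂ) * Complex.I] : Fin 2 → ℂ) m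
      = ((Real.cos (θ/2) : ℂ))⁻¹ *
        Complex.exp (((θ/2 * (![1,-1] : Fin 2 → ℝ) m : ℝ)) * Complex.I) := by
    intro m
    have hc : ((Real.cos (θ/2) : ℂ)) ≠ 0 := by exact_mod_cast hcos.ne'
    have hc' : Complex.cos ((θ:ℂ)/2) ≠ 0 := by
      rw [show ((θ:ℂ)/2) = ((θ/2 : ℝ) : ℂ) by push_cast; ring, ← Complex.ofReal_cos]
      exact hc
    fin_cases m
    · simp only [Fin.mk_zero, Fin.isValue, Matrix.cons_val_zero, Complex.ofReal_one, mul_one]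
      rw [Complex.exp_mul_I, Real.tan_eq_sin_div_cos]
      push_cast
      field_simp [hc']
    · simp only [Fin.mk_one, Fin.isValue, Matrix.cons_val_one, Matrix.head_cons,
        Complex.ofReal_neg, Complex.ofReal_one]
      rw [Complex.exp_mul_I, Real.tan_eq_sin_div_cos]
      push_cast
      rw [show ((θ:ℂ)/2 * (-1)) = -((θ:ℂ)/2) by ring, Complex.cos_neg, Complex.sin_neg]
      field_simp [hc']
      ring
  simp only [hv]
  rw [Finset.prod_mul_distrib, Finset.prod_const, Finset.card_univ, Fintype.card_fin,
    ← Complex.exp_sum, ← Finset.sum_mul, ← Complex.ofReal_sum, ← Finset.mul_sum]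


lemma S_bound {N : ℕ} (j : Fin N → Fin 2) :
    |∑ i, (![1,-1] : Fin 2 → ℝ) (j i)| ≤ N := by
  calc |∑ i, (![1,-1] : Fin 2 → ℝ) (j i)| ≤ ∑ i, |(![1,-1] : Fin 2 → ℝ) (j i)| :=
        Finset.abs_sum_le_sum_abs _ _
    _ = ∑ _i : Fin N, (1:ℝ) := by
        apply Finset.sum_congr rfl
        intro i _
        have : ∀ m : Fin 2, |(![1,-1] : Fin 2 → ℝ) m| = 1 := by
          intro m; fin_cases m <;> norm_num
        exact this (j i)
    _ = N := by simp


lemma S_jk {N k : ℕ} (hk : k ≤ N) :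
    ∑ i : Fin N, (![1,-1] : Fin 2 → ℝ) ((fun i : Fin N => if (i:ℕ) < k then (0:Fin 2) else 1) i)
    = 2 * k - N := by
  have h1 : ∀ i : Fin N, (![1,-1] : Fin 2 → ℝ) (if (i:ℕ) < k then (0:Fin 2) else 1)
      = if (i:ℕ) < k then (1:ℝ) else -1 := by
    intro i; by_cases h : (i:ℕ) < k <;> simp [h]
  simp only [h1]
  rw [Fin.sum_univ_eq_sum_range (fun i => if i < k then (1:ℝ) else -1)]
  rw [Finset.range_eq_Ico, ← Finset.sum_Ico_consecutive _ (Nat.zero_le k) hk]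
  rw [Finset.sum_ite_of_true (h := fun i hi => (Finset.mem_Ico.1 hi).2),
    Finset.sum_ite_of_false (h := fun i hi => by
      have := (Finset.mem_Ico.1 hi).1; omega)]
  simp [Nat.card_Ico]
  push_cast [Nat.cast_sub hk]
  ring

lemma key_fwd {ι : Type*} [Fintype ι] [DecidableEq ι] (d : ι → ℂ)
    (c : ι → ℝ) (hc : ∀ j, 0 ≤ c j) (hc0 : ∃ j, 0 < c j)
    (hsum : ∑ j, (c j : ℂ) * d j = 0) :
    (0 : ℂ) ∈ angNumRange (Matrix.diagonal d) ∧
    ∃ ρ : Matrix ι ι ℂ, ρ.PosSemidef ∧ ρ ≠ 0 ∧ ((Matrix.diagonal d)ᴴ * ρ).trace = 0 := by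
  obtain ⟨j0, hj0⟩ := hc0
  have hT : 0 < ∑ j, c j := Finset.sum_pos' (fun j _ => hc j) ⟨j0, Finset.mem_univ _, hj0⟩
  set T := ∑ j, c j with hTdef
  set u : ι → ℝ := fun j => Real.sqrt (c j / T) with hudef
  have hu : ∀ j, u j * u j = c j / T := fun j =>
    Real.mul_self_sqrt (div_nonneg (hc j) hT.le)
  constructor
  · refine Set.mem_iUnion.2 ⟨1, Set.mem_iUnion.2 ⟨Set.mem_Ioi.2 one_pos, ?_⟩⟩
    refine ⟨fun j => (u j : ℂ), ?_, ?_⟩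
    · have h1 : ∀ j, (star fun j => (u j : ℂ)) j * (u j : ℂ) = ((c j / T : ℝ) : ℂ) := by
        intro j
        simp only [Pi.star_apply, Complex.star_def, Complex.conj_ofReal]
        rw [← Complex.ofReal_mul, hu j]
      rw [dotProduct]
      simp only [h1]
      rw [← Complex.ofReal_sum, ← Finset.sum_div]
      simp [div_self hT.ne']
      rw [← Complex.ofReal_sum, ← hTdef]
      exact div_self (Complex.ofReal_ne_zero.2 hT.ne')
    · rw [dotProduct]
      have h2 : ∀ j, (star fun j => (u j : ℂ)) j *
          (((1:ℝ) : ℂ) • Matrix.diagonal d).mulVec (fun j => (u j : ℂ)) j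
          = (T : ℂ)⁻¹ * ((c j : ℂ) * d j) := by
        intro j
        simp only [Pi.star_apply, Complex.star_def, Complex.conj_ofReal, smul_mulVec,
          Pi.smul_apply, mulVec_diagonal, Complex.ofReal_one, one_smul]
        rw [show ((u j : ℝ):ℂ) * (d j * (u j :ℂ))
            = (((u j * u j : ℝ)) : ℂ) * d j by push_cast; ring]
        rw [hu j, Complex.ofReal_div]
        field_simp
      simp only [h2]
      rw [← Finset.mul_sum, hsum, mul_zero]
  · refine ⟨Matrix.diagonal (fun j => (c j : ℂ)), ?_, ?_, ?_⟩
    · exact Matrix.PosSemidef.diagonal (fun j => by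
        simpa using Complex.zero_le_real.2 (hc j))
    · intro h
      have := congrFun (congrFun h j0) j0
      simp only [Matrix.diagonal_apply_eq, Matrix.zero_apply] at this
      exact hj0.ne' (by exact_mod_cast this)
    · rw [Matrix.diagonal_conjTranspose, Matrix.diagonal_mul_diagonal, Matrix.trace_diagonal]
      have h3 : ∀ j, star (d j) * (c j : ℂ) = (starRingEnd ℂ) ((c j : ℂ) * d j) := by
        intro j; simp [Complex.star_def, mul_comm]
      simp only [Pi.star_apply, h3]
      rw [← map_sum (starRingEnd ℂ), hsum, map_zero]
open Matrix


lemma key_rev {ι : Type*} [Fintype ι] [DecidableEq ι] (d : ι → ℂ)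
    (hd : ∀ j, 0 < (d j).re) :
    (0 : ℂ) ∉ angNumRange (Matrix.diagonal d) ∧
    ¬∃ ρ : Matrix ι ι ℂ, ρ.PosSemidef ∧ ρ ≠ 0 ∧ ((Matrix.diagonal d)ᴴ * ρ).trace = 0 := by
  constructor
  · intro h
    rw [angNumRange, Set.mem_iUnion] at h
    obtain ⟨t, h⟩ := h
    rw [Set.mem_iUnion] at h
    obtain ⟨ht, ψ, hψ1, hψ2⟩ := h
    rw [Set.mem_Ioi] at ht
    -- compute the real part of the quantity
    have hterm : ∀ j, (star ψ) j * (((t:ℝ):ℂ) • Matrix.diagonal d).mulVec ψ j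
        = (t : ℂ) * ((Complex.normSq (ψ j) : ℝ) : ℂ) * d j := by
      intro j
      simp only [Pi.star_apply, Complex.star_def, smul_mulVec, Pi.smul_apply,
        mulVec_diagonal, smul_eq_mul]
      rw [← Complex.mul_conj (ψ j)]
      ring
    rw [dotProduct] at hψ2
    simp only [hterm] at hψ2
    have hre : (0:ℝ) = ∑ j, t * Complex.normSq (ψ j) * (d j).re := by
      have := congrArg Complex.re hψ2
      simpa [Complex.re_sum, Complex.mul_re] using this
    -- each term is nonneg, so all are zero
    have hnn : ∀ j ∈ Finset.univ, (0:ℝ) ≤ t * Complex.normSq (ψ j) * (d j).re :=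
      fun j _ => mul_nonneg (mul_nonneg ht.le (Complex.normSq_nonneg _)) (hd j).le
    have hall : ∀ j ∈ Finset.univ, t * Complex.normSq (ψ j) * (d j).re = 0 :=
      (Finset.sum_eq_zero_iff_of_nonneg hnn).1 hre.symm
    have hzero : ∀ j, Complex.normSq (ψ j) = 0 := by
      intro j
      have := hall j (Finset.mem_univ j)
      have h1 := (hd j).ne'
      have h2 := ht.ne'
      rcases mul_eq_zero.1 this with h | h
      · rcases mul_eq_zero.1 h with h | h
        · exact absurd h h2
        · exact h
      · exact absurd h h1
    -- contradiction with norm 1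
    have : (1:ℂ) = 0 := by
      rw [← hψ1, dotProduct]
      apply Finset.sum_eq_zero
      intro j _
      simp only [Pi.star_apply, Complex.star_def, ← Complex.normSq_eq_conj_mul_self, hzero j]
      simp
    exact one_ne_zero this
  · rintro ⟨ρ, hρ, hρ0, htr⟩
    obtain ⟨B, rfl⟩ : ∃ B : Matrix ι ι ℂ, ρ = Bᴴ * B := by
      open scoped MatrixOrder in
      exact CStarAlgebra.nonneg_iff_eq_star_mul_self.mp hρ.nonneg
    have hdiag : ∀ j, (Bᴴ * B) j j = ((∑ i, Complex.normSq (B i j) : ℝ) : ℂ) := by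
      intro j
      simp only [Matrix.mul_apply, Matrix.conjTranspose_apply, Complex.star_def,
        ← Complex.normSq_eq_conj_mul_self]
      push_cast
      rfl
    have htr' : ((Matrix.diagonal d)ᴴ * (Bᴴ * B)).trace
        = ∑ j, star (d j) * (Bᴴ * B) j j := by
      rw [Matrix.diagonal_conjTranspose, Matrix.trace]
      congr 1
      ext j
      simp [Matrix.diag, Matrix.diagonal_mul]
    rw [htr'] at htr
    have hre : (0:ℝ) = ∑ j, (d j).re * (∑ i, Complex.normSq (B i j)) := by
      have := congrArg Complex.re htr
      rw [Complex.re_sum, Complex.zero_re] at this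
      convert this.symm using 2 with j
      rw [hdiag j]
      simp [Complex.mul_re, Complex.star_def]
    have hnn : ∀ j ∈ Finset.univ, (0:ℝ) ≤ (d j).re * (∑ i, Complex.normSq (B i j)) := by
      intro j _
      have : (0:ℝ) ≤ ∑ i, Complex.normSq (B i j) :=
        Finset.sum_nonneg fun i _ => Complex.normSq_nonneg _
      exact mul_nonneg (hd j).le this
    have hall := (Finset.sum_eq_zero_iff_of_nonneg hnn).1 hre.symm
    apply hρ0
    ext i j
    have := hall j (Finset.mem_univ j)
    have hs : ∑ i, Complex.normSq (B i j) = 0 := by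
      rcases mul_eq_zero.1 this with h | h
      · exact absurd h (hd j).ne'
      · exact h
    have hB : ∀ i, B i j = 0 := by
      intro i
      have := (Finset.sum_eq_zero_iff_of_nonneg
        (fun i _ => Complex.normSq_nonneg (B i j))).1 hs i (Finset.mem_univ i)
      exact Complex.normSq_eq_zero.1 this
    simp only [Matrix.mul_apply, Matrix.conjTranspose_apply, Matrix.zero_apply]
    apply Finset.sum_eq_zero
    intro k _
    rw [hB k]
    simp


theorem diag_tensor_power_zero_in_angular_range {θ : ℝ} (hθ : θ ∈ Set.Ioo 0 Real.pi)
    (a : ℝ) (ha : a = Real.tan (θ / 2))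
    (D : Matrix (Fin 2) (Fin 2) ℂ)
    (hD : D = Matrix.diagonal ![1 + a * Complex.I, 1 - a * Complex.I]) (N : ℕ) :
    ((0 : ℂ) ∈ angNumRange (tensorPow N D) ↔ Real.pi / θ ≤ (N : ℝ)) ∧
    ((∃ ρ : Matrix (Fin N → Fin 2) (Fin N → Fin 2) ℂ,
        ρ.PosSemidef ∧ ρ ≠ 0 ∧ ((tensorPow N D)ᴴ * ρ).trace = 0) ↔ Real.pi / θ ≤ (N : ℝ)) := by
  obtain ⟨hθ1, hθ2⟩ := hθ
  subst ha hD
  have hcos : (0:ℝ) < Real.cos (θ/2) :=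
    Real.cos_pos_of_mem_Ioo ⟨by linarith [Real.pi_pos], by linarith⟩
  -- notation
  set e : Fin 2 → ℝ := ![1,-1] with he
  set S : (Fin N → Fin 2) → ℝ := fun j => ∑ i, e (j i) with hS
  set rC : ℂ := ((Real.cos (θ/2) : ℂ))⁻¹ ^ N with hrC
  set dvec : (Fin N → Fin 2) → ℂ :=
    fun j => rC * Complex.exp (((θ/2 * S j : ℝ)) * Complex.I) with hdvec
  have hdiagonal : tensorPow N (Matrix.diagonal
      ![1 + (Real.tan (θ/2) : ℂ) * Complex.I, 1 - (Real.tan (θ/2) : ℂ) * Complex.I])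
      = Matrix.diagonal dvec := by
    rw [tensorPow_diagonal,
      show (fun j : Fin N → Fin 2 => ∏ i, (![1 + (Real.tan (θ/2) : ℂ) * Complex.I,
          1 - (Real.tan (θ/2) : ℂ) * Complex.I] : Fin 2 → ℂ) (j i)) = dvec
        from funext fun j => entry_formula hθ1 hθ2 N j]
  rw [hdiagonal]
  -- forward direction
  have hfwd : Real.pi / θ ≤ (N:ℝ) →
      (0 : ℂ) ∈ angNumRange (Matrix.diagonal dvec) ∧
      ∃ ρ : Matrix (Fin N → Fin 2) (Fin N → Fin 2) ℂ,
        ρ.PosSemidef ∧ ρ ≠ 0 ∧ ((Matrix.diagonal dvec)ᴴ * ρ).trace = 0 := by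
    intro hN
    have hπθ : 0 < Real.pi / θ := div_pos Real.pi_pos hθ1
    have hN1 : 1 ≤ N := by
      by_contra h
      push_neg at h
      interval_cases N
      · simp at hN; linarith
    set k : ℕ := ⌈((N:ℝ) + Real.pi/θ)/2⌉₊ with hk
    set m : ℕ := (N+1)/2 with hm
    have hkN : k ≤ N := Nat.ceil_le.2 (by linarith)
    have hmN : m ≤ N := by omega
    have hk_lb : Real.pi/θ ≤ 2*(k:ℝ) - N := by
      have := Nat.le_ceil (((N:ℝ) + Real.pi/θ)/2)
      linarith
    have hk_ub : 2*(k:ℝ) - N < Real.pi/θ + 2 := by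
      have := Nat.ceil_lt_add_one (show (0:ℝ) ≤ ((N:ℝ) + Real.pi/θ)/2 by positivity)
      linarith
    set φ1 : ℝ := θ/2 * (2*(k:ℝ) - N) with hφ1
    set φ2 : ℝ := θ/2 * (2*(m:ℝ) - N) with hφ2
    have hφ1_lb : Real.pi/2 ≤ φ1 := by
      have h := mul_le_mul_of_nonneg_left hk_lb (by linarith : (0:ℝ) ≤ θ/2)
      rw [show θ/2 * (Real.pi/θ) = Real.pi/2 by field_simp] at h
      exact h
    have hφ1_ub : φ1 < Real.pi/2 + θ := by
      have h := mul_lt_mul_of_pos_left hk_ub (by linarith : (0:ℝ) < θ/2)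
      rw [show θ/2 * (Real.pi/θ + 2) = Real.pi/2 + θ by field_simp] at h
      exact h
    have hcos1 : Real.cos φ1 ≤ 0 :=
      Real.cos_nonpos_of_pi_div_two_le_of_le hφ1_lb (by linarith)
    have hm01 : (2*(m:ℝ) - N) = 0 ∨ (2*(m:ℝ) - N) = 1 := by
      rcases Nat.even_or_odd N with ⟨c, hc⟩ | ⟨c, hc⟩
      · left
        have : 2 * m = N := by omega
        have : (2:ℝ) * m = N := by exact_mod_cast this
        linarith
      · right
        have : 2 * m = N + 1 := by omega
        have : (2:ℝ) * m = N + 1 := by exact_mod_cast this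
        linarith
    have hφ2_mem : φ2 ∈ Set.Ioo (-(Real.pi/2)) (Real.pi/2) := by
      rcases hm01 with h | h <;> rw [hφ2, h] <;> constructor <;>
        [linarith [Real.pi_pos]; linarith [Real.pi_pos];
         linarith [Real.pi_pos]; linarith]
    have hcos2 : 0 < Real.cos φ2 := Real.cos_pos_of_mem_Ioo hφ2_mem
    -- indices and their d-values
    set jj : ℕ → (Fin N → Fin 2) := fun l => fun i => if (i:ℕ) < l then 0 else 1 with hjj
    have hSjj : ∀ l : ℕ, l ≤ N → S (jj l) = 2*(l:ℝ) - N := by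
      intro l hl
      exact S_jk hl
    have hd : ∀ l : ℕ, l ≤ N →
        dvec (jj l) = rC * Complex.exp (((θ/2 * (2*(l:ℝ) - N) : ℝ)) * Complex.I) := by
      intro l hl
      rw [hdvec]
      simp only
      rw [hSjj l hl]
    have hNsub : ∀ l : ℕ, l ≤ N → (2*((N - l : ℕ):ℝ) - N) = -(2*(l:ℝ) - N) := by
      intro l hl
      rw [Nat.cast_sub hl]
      ring
    have pair : ∀ l : ℕ, l ≤ N → dvec (jj l) + dvec (jj (N - l))
        = rC * 2 * ((Real.cos (θ/2 * (2*(l:ℝ) - N)) : ℝ) : ℂ) := by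
      intro l hl
      rw [hd l hl, hd (N - l) (Nat.sub_le N l), hNsub l hl]
      rw [show θ/2 * -(2*(l:ℝ) - N) = -(θ/2 * (2*(l:ℝ) - N)) by ring]
      set x : ℝ := θ/2 * (2*(l:ℝ) - N)
      rw [Complex.ofReal_neg, Complex.exp_mul_I, Complex.exp_mul_I,
        Complex.cos_neg, Complex.sin_neg, ← Complex.ofReal_cos]
      ring
    -- the convex combination
    set c : (Fin N → Fin 2) → ℝ := fun j =>
      Real.cos φ2 * ((if j = jj k then 1 else 0) + (if j = jj (N-k) then 1 else 0))
      + (- Real.cos φ1) * ((if j = jj m then 1 else 0) + (if j = jj (N-m) then 1 else 0))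
      with hc
    have hite01 : ∀ (p : Prop) [Decidable p], (0:ℝ) ≤ if p then 1 else 0 := by
      intro p hp
      split <;> norm_num
    have hcnn : ∀ j, 0 ≤ c j := by
      intro j
      apply add_nonneg
      · exact mul_nonneg hcos2.le (add_nonneg (hite01 _) (hite01 _))
      · exact mul_nonneg (by linarith) (add_nonneg (hite01 _) (hite01 _))
    have hcpos : 0 < c (jj k) := by
      have h1 : (if jj k = jj k then (1:ℝ) else 0) = 1 := if_pos rfl
      have h2 := hite01 (jj k = jj (N-k))
      have h3 := hite01 (jj k = jj m)
      have h4 := hite01 (jj k = jj (N-m))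
      have h5 : (0:ℝ) ≤ - Real.cos φ1 := by linarith
      rw [hc]
      simp only [h1, if_pos rfl, if_true]
      nlinarith [mul_nonneg hcos2.le h2, mul_nonneg h5 (add_nonneg h3 h4)]
    have hd_single : ∀ x : (Fin N → Fin 2),
        ∑ j, (if j = x then (1:ℂ) else 0) * dvec j = dvec x := by
      intro x
      simp [ite_mul, Finset.sum_ite_eq']
    have hsum : ∑ j, ((c j : ℝ) : ℂ) * dvec j = 0 := by
      have expand : ∀ j : (Fin N → Fin 2), ((c j : ℝ) : ℂ) * dvec j
          = ((Real.cos φ2 : ℝ):ℂ) * ((if j = jj k then (1:ℂ) else 0) * dvec j)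
          + ((Real.cos φ2 : ℝ):ℂ) * ((if j = jj (N-k) then (1:ℂ) else 0) * dvec j)
          + (-((Real.cos φ1 : ℝ):ℂ)) * ((if j = jj m then (1:ℂ) else 0) * dvec j)
          + (-((Real.cos φ1 : ℝ):ℂ)) * ((if j = jj (N-m) then (1:ℂ) else 0) * dvec j) := by
        intro j
        rw [hc]
        push_cast [apply_ite (fun x : ℝ => (x : ℂ))]
        ring
      rw [Finset.sum_congr rfl (fun j _ => expand j)]
      rw [Finset.sum_add_distrib, Finset.sum_add_distrib, Finset.sum_add_distrib,
        ← Finset.mul_sum, ← Finset.mul_sum, ← Finset.mul_sum, ← Finset.mul_sum,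
        hd_single, hd_single, hd_single, hd_single]
      have e1 : dvec (jj k) + dvec (jj (N-k)) = rC * 2 * ((Real.cos φ1 : ℝ) : ℂ) := pair k hkN
      have e2 : dvec (jj m) + dvec (jj (N-m)) = rC * 2 * ((Real.cos φ2 : ℝ) : ℂ) := pair m hmN
      calc ((Real.cos φ2 : ℝ):ℂ) * dvec (jj k) + ((Real.cos φ2 : ℝ):ℂ) * dvec (jj (N-k))
          + (-((Real.cos φ1 : ℝ):ℂ)) * dvec (jj m) + (-((Real.cos φ1 : ℝ):ℂ)) * dvec (jj (N-m))
          = ((Real.cos φ2 : ℝ):ℂ) * (dvec (jj k) + dvec (jj (N-k)))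
          + (-((Real.cos φ1 : ℝ):ℂ)) * (dvec (jj m) + dvec (jj (N-m))) := by ring
        _ = 0 := by rw [e1, e2]; ring
    exact key_fwd dvec c hcnn ⟨jj k, hcpos⟩ hsum
  -- reverse direction
  have hrev : ¬ (Real.pi / θ ≤ (N:ℝ)) →
      ((0 : ℂ) ∉ angNumRange (Matrix.diagonal dvec) ∧
      ¬ ∃ ρ : Matrix (Fin N → Fin 2) (Fin N → Fin 2) ℂ,
        ρ.PosSemidef ∧ ρ ≠ 0 ∧ ((Matrix.diagonal dvec)ᴴ * ρ).trace = 0) := by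
    intro hN
    push_neg at hN
    have hNθ : (N:ℝ) * θ < Real.pi := by
      rw [lt_div_iff₀ hθ1] at hN
      linarith [hN]
    apply key_rev
    intro j
    have hb := S_bound j
    have habs : |θ/2 * S j| < Real.pi/2 := by
      rw [abs_mul, abs_of_nonneg (by linarith : (0:ℝ) ≤ θ/2)]
      calc θ/2 * |S j| ≤ θ/2 * N :=
            mul_le_mul_of_nonneg_left hb (by linarith)
        _ < Real.pi/2 := by linarith
    have hcosj : 0 < Real.cos (θ/2 * S j) :=
      Real.cos_pos_of_mem_Ioo ⟨by cases abs_lt.1 habs; linarith, (abs_lt.1 habs).2⟩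
    have hre : (dvec j).re = ((Real.cos (θ/2))⁻¹ ^ N) * Real.cos (θ/2 * S j) := by
      rw [hdvec]
      simp only
      rw [hrC, show ((Real.cos (θ/2) : ℂ))⁻¹ ^ N = (((Real.cos (θ/2))⁻¹ ^ N : ℝ) : ℂ) by
        push_cast; ring]
      rw [Complex.re_ofReal_mul, Complex.exp_ofReal_mul_I_re]
    rw [hre]
    positivity
  by_cases hN : Real.pi / θ ≤ (N:ℝ)
  · exact ⟨⟨fun _ => hN, fun _ => (hfwd hN).1⟩, ⟨fun _ => hN, fun _ => (hfwd hN).2⟩⟩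
  · exact ⟨⟨fun h => absurd h (hrev hN).1, fun h => absurd h hN⟩,
      ⟨fun h => absurd h (hrev hN).2, fun h => absurd h hN⟩⟩
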